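/- Theorem 7 (lower bound on the asymptotic maximal modified FDR): Suppose 1 ≤ m_1 < m, suppose the group membership is symmetric (j ∈ G_i if and only if i ∈ G_j), suppose G_i ⊆ {1,…,m_1} for every i ≤ m_1 and each such G_i contains at least one index k with d_k^t = 1, and suppose G_i ⊆ {m_1+1,…,m} for every i > m_1 with d_i^t = 0 for all i > m_1. Assume the posterior convergence condition (C) holds and that w_{in}(d) > 0 for all n, i, d. Let d̂_n be a maximizer of Σ_{i=1}^m d_i w_{in}(d) over d ∈ {0,1}^m (the non-marginal rule with β = 0). Then for all sufficiently large n one has d̂_{n,i} = d_i^t for every i ≤ m_1 and Σ_{i>m_1} d̂_{n,i} ≥ 1, and liminf_{n→∞} (Σ_{i=1}^m d̂_{n,i}(1 − w_{in}(d̂_n))) / (Σ_{i=1}^m d̂_{n,i}) ≥ 1 / (Σ_{i=1}^m d_i^t + 1). -/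

import Mathlib

open Filter

/-- Theorem 7 (lower bound on the asymptotic maximal modified FDR). -/
theorem max_mFDR_lower_bound
    (m m₁ : ℕ) (hm₁ : 1 ≤ m₁) (hm : m₁ < m)
    (dt : Fin m → Bool)
    (G : Fin m → Finset (Fin m)) (hGmem : ∀ i, i ∈ G i)
    (hGsym : ∀ i j, j ∈ G i ↔ i ∈ G j)
    (hGlow : ∀ i : Fin m, (i:ℕ) < m₁ → ∀ j ∈ G i, (j:ℕ) < m₁)
    (hGfalse : ∀ i : Fin m, (i:ℕ) < m₁ → ∃ k ∈ G i, dt k = true)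
    (hGhigh : ∀ i : Fin m, m₁ ≤ (i:ℕ) → ∀ j ∈ G i, m₁ ≤ (j:ℕ))
    (hdthigh : ∀ i : Fin m, m₁ ≤ (i:ℕ) → dt i = false)
    (w : ℕ → Fin m → (Fin m → Bool) → ℝ)
    (hw : ∀ n i d, w n i d ∈ Set.Ioo (0:ℝ) 1)
    (hdep : ∀ n i (d d' : Fin m → Bool), (∀ j ∈ G i, d j = d' j) → w n i d = w n i d')
    (hC1 : ∀ (i : Fin m) (d : Fin m → Bool),
      (∀ j ∈ G i, d j = dt j) → Tendsto (fun n => w n i d) atTop (nhds 1))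
    (hC0 : ∀ (i : Fin m) (d : Fin m → Bool),
      (¬ ∀ j ∈ G i, d j = dt j) → Tendsto (fun n => w n i d) atTop (nhds 0))
    (dhat : ℕ → Fin m → Bool)
    (hdhat : ∀ n (d : Fin m → Bool),
      (∑ i, if d i then w n i d else 0) ≤
        (∑ i, if dhat n i then w n i (dhat n) else 0)) :
    (∃ N : ℕ, ∀ n ≥ N,
      (∀ i : Fin m, (i:ℕ) < m₁ → dhat n i = dt i) ∧
      (∃ i : Fin m, m₁ ≤ (i:ℕ) ∧ dhat n i = true)) ∧
    (1:ℝ) / (((Finset.univ.filter fun i => dt i = true).card : ℝ) + 1) ≤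
      Filter.liminf (fun n =>
        (∑ i, if dhat n i then 1 - w n i (dhat n) else 0) /
          (∑ i, if dhat n i then (1:ℝ) else 0)) Filter.atTop := by
  classical
  set T : Finset (Fin m) := Finset.univ.filter fun i => dt i = true with hTdef
  set L : Finset (Fin m) := Finset.univ.filter (fun i : Fin m => (i:ℕ) < m₁) with hLdef
  set Hs : Finset (Fin m) := Finset.univ.filter (fun i : Fin m => ¬ (i:ℕ) < m₁) with hHdef
  have hLT : L.filter (fun i => dt i = true) = T := by
    ext i
    simp only [hTdef, hLdef, Finset.mem_filter, Finset.mem_univ, true_and]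
    constructor
    · rintro ⟨-, h⟩; exact h
    · intro h
      refine ⟨?_, h⟩
      by_contra hge
      have h2 := hdthigh i (not_lt.mp hge)
      rw [h] at h2; exact absurd h2 (by simp)
  -- every n has a rejection in the high block
  have hB : ∀ n, ∃ i : Fin m, m₁ ≤ (i:ℕ) ∧ dhat n i = true := by
    intro n
    by_contra hcon
    push_neg at hcon
    have hfalse : ∀ i : Fin m, m₁ ≤ (i:ℕ) → dhat n i = false := by
      intro i hi
      cases h : dhat n i
      · rfl
      · exact absurd h (hcon i hi)
    set i₀ : Fin m := ⟨m₁, hm⟩ with hi₀def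
    have hi₀m : m₁ ≤ (i₀:ℕ) := le_refl _
    set d' : Fin m → Bool := fun j => if j = i₀ then true else dhat n j with hd'
    have key := hdhat n d'
    have hsum : ∀ i ∈ Finset.univ.erase i₀,
        (if d' i then w n i d' else 0) = (if dhat n i then w n i (dhat n) else 0) := by
      intro i hi
      have hne : i ≠ i₀ := Finset.ne_of_mem_erase hi
      have hdi : d' i = dhat n i := by simp [hd', hne]
      by_cases hdh : dhat n i = true
      · have hlow : (i:ℕ) < m₁ := by
          by_contra hge
          have h2 := hfalse i (not_lt.mp hge)
          rw [h2] at hdh; exact absurd hdh (by simp)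
        have hweq : w n i d' = w n i (dhat n) := by
          apply hdep
          intro j hj
          have hjne : j ≠ i₀ := by
            intro hji
            rw [hji] at hj
            have h3 : i ∈ G i₀ := (hGsym i i₀).mp hj
            have := hGhigh i₀ hi₀m i h3
            omega
          simp [hd', hjne]
        rw [hdi, hdh, hweq]
      · have h4 : dhat n i = false := by
          cases h : dhat n i
          · rfl
          · exact absurd h hdh
        rw [hdi, h4]
        simp
    have e1 : (∑ i, if d' i then w n i d' else 0)
        = (∑ i ∈ Finset.univ.erase i₀, (if dhat n i then w n i (dhat n) else 0))
          + w n i₀ d' := by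
      rw [← Finset.sum_erase_add Finset.univ _ (Finset.mem_univ i₀)]
      congr 1
      · exact Finset.sum_congr rfl hsum
      · simp [hd']
    have e2 : (∑ i, if dhat n i then w n i (dhat n) else 0)
        = ∑ i ∈ Finset.univ.erase i₀, (if dhat n i then w n i (dhat n) else 0) := by
      rw [← Finset.sum_erase_add Finset.univ _ (Finset.mem_univ i₀)]
      have h5 : dhat n i₀ = false := hfalse i₀ hi₀m
      simp [h5]
    rw [e1, e2] at key
    have := (hw n i₀ d').1
    linarith
  -- the target sum over the true set tends to T.card
  have hA_tend : Tendsto (fun n => ∑ i ∈ T, w n i dt) atTop (nhds ((T.card : ℝ))) := by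
    have h := tendsto_finset_sum T (fun i (_ : i ∈ T) => hC1 i dt (fun j _ => rfl))
    simpa using h
  -- bad configurations have strictly smaller "agree" count
  have hScard : ∀ b : Fin m → Bool, (∃ j : Fin m, (j:ℕ) < m₁ ∧ b j ≠ dt j) →
      ((L.filter fun i => b i = true ∧ ∀ j ∈ G i, b j = dt j).card : ℝ) ≤ (T.card : ℝ) - 1 := by
    rintro b ⟨j, hjm, hjb⟩
    set S := L.filter fun i => b i = true ∧ ∀ j ∈ G i, b j = dt j with hS
    have hST : S ⊆ T := by
      intro i hi
      simp only [hS, Finset.mem_filter] at hi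
      obtain ⟨-, hbi, hag⟩ := hi
      have h1 := hag i (hGmem i)
      simp only [hTdef, Finset.mem_filter, Finset.mem_univ, true_and]
      rw [← h1, hbi]
    obtain ⟨k, hkG, hkT⟩ := hGfalse j hjm
    have hkmem : k ∈ T := by
      simp only [hTdef, Finset.mem_filter, Finset.mem_univ, true_and]; exact hkT
    have hkS : k ∉ S := by
      intro hk
      simp only [hS, Finset.mem_filter] at hk
      obtain ⟨-, -, hag⟩ := hk
      exact hjb (hag j ((hGsym j k).mp hkG))
    have hss : S ⊂ T := (Finset.ssubset_iff_of_subset hST).mpr ⟨k, hkmem, hkS⟩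
    have hlt : S.card + 1 ≤ T.card := Finset.card_lt_card hss
    have hlt' : (S.card : ℝ) + 1 ≤ (T.card : ℝ) := by exact_mod_cast hlt
    linarith
  -- the disagreement error tends to 0
  have hE : ∀ b : Fin m → Bool, Tendsto (fun n => ∑ i ∈ L,
      if (b i = true ∧ ¬ ∀ j ∈ G i, b j = dt j) then w n i b else 0) atTop (nhds 0) := by
    intro b
    have h : Tendsto (fun n => ∑ i ∈ L,
        if (b i = true ∧ ¬ ∀ j ∈ G i, b j = dt j) then w n i b else 0) atTop
        (nhds (∑ _i ∈ L, (0:ℝ))) := by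
      apply tendsto_finset_sum
      intro i _
      by_cases hc : (b i = true ∧ ¬ ∀ j ∈ G i, b j = dt j)
      · simpa only [if_pos hc] using hC0 i b hc.2
      · simp only [if_neg hc]
        exact tendsto_const_nhds
    simpa using h
  -- pointwise bound on the low-block value of any configuration
  have hW_le : ∀ n (b : Fin m → Bool),
      (∑ i ∈ L, if b i then w n i b else 0) ≤
        ((L.filter fun i => b i = true ∧ ∀ j ∈ G i, b j = dt j).card : ℝ)
        + ∑ i ∈ L, (if (b i = true ∧ ¬ ∀ j ∈ G i, b j = dt j) then w n i b else 0) := by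
    intro n b
    have hcard : ((L.filter fun i => b i = true ∧ ∀ j ∈ G i, b j = dt j).card : ℝ)
        = ∑ i ∈ L, (if (b i = true ∧ ∀ j ∈ G i, b j = dt j) then (1:ℝ) else 0) := by
      rw [Finset.card_filter]
      push_cast
      rfl
    rw [hcard, ← Finset.sum_add_distrib]
    apply Finset.sum_le_sum
    intro i _
    by_cases hb : b i = true
    · by_cases hag : ∀ j ∈ G i, b j = dt j
      · have h1 := (hw n i b).2.le
        have h2 := (hw n i b).1.le
        rw [if_pos hb, if_pos (show b i = true ∧ ∀ j ∈ G i, b j = dt j from ⟨hb, hag⟩),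
          if_neg (show ¬(b i = true ∧ ¬ ∀ j ∈ G i, b j = dt j) from fun h => h.2 hag)]
        linarith
      · rw [if_pos hb, if_neg (show ¬(b i = true ∧ ∀ j ∈ G i, b j = dt j) from fun h => hag h.2),
          if_pos (show b i = true ∧ ¬ ∀ j ∈ G i, b j = dt j from ⟨hb, hag⟩)]
        linarith
    · have h2 := (hw n i b).1.le
      rw [if_neg hb, if_neg (show ¬(b i = true ∧ ∀ j ∈ G i, b j = dt j) from fun h => hb h.1),
        if_neg (show ¬(b i = true ∧ ¬ ∀ j ∈ G i, b j = dt j) from fun h => hb h.1)]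
      norm_num
  -- eventually the low block decisions are correct
  have hev : ∀ᶠ n in atTop, (∀ i : Fin m, (i:ℕ) < m₁ → dhat n i = dt i) := by
    have h1 : ∀ᶠ n in atTop, (T.card:ℝ) - 1/2 < ∑ i ∈ T, w n i dt :=
      hA_tend.eventually (eventually_gt_nhds (by linarith))
    have h2 : ∀ᶠ n in atTop, ∀ b : Fin m → Bool,
        (∑ i ∈ L, if (b i = true ∧ ¬ ∀ j ∈ G i, b j = dt j) then w n i b else 0) < 1/2 := by
      rw [eventually_all]
      intro b
      exact (hE b).eventually (eventually_lt_nhds (by norm_num))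
    filter_upwards [h1, h2] with n hn1 hn2
    by_contra hcon
    push_neg at hcon
    obtain ⟨i₁, hi₁, hne⟩ := hcon
    set b := dhat n with hbdef
    set dstar : Fin m → Bool := fun j => if (j:ℕ) < m₁ then dt j else b j with hds
    have key := hdhat n dstar
    have split1 : (∑ i, if dstar i then w n i dstar else 0)
        = (∑ i ∈ L, if dstar i then w n i dstar else 0)
          + ∑ i ∈ Hs, (if dstar i then w n i dstar else 0) := by
      rw [hLdef, hHdef]
      exact (Finset.sum_filter_add_sum_filter_not Finset.univ _ _).symm
    have split2 : (∑ i, if b i then w n i b else 0)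
        = (∑ i ∈ L, if b i then w n i b else 0)
          + ∑ i ∈ Hs, (if b i then w n i b else 0) := by
      rw [hLdef, hHdef]
      exact (Finset.sum_filter_add_sum_filter_not Finset.univ _ _).symm
    have hHeq : (∑ i ∈ Hs, if dstar i then w n i dstar else 0)
        = ∑ i ∈ Hs, (if b i then w n i b else 0) := by
      apply Finset.sum_congr rfl
      intro i hi
      have him : ¬ (i:ℕ) < m₁ := by
        simpa only [hHdef, Finset.mem_filter, Finset.mem_univ, true_and] using hi
      have hdsi : dstar i = b i := by simp [hds, him]
      have hweq : w n i dstar = w n i b := by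
        apply hdep
        intro j hj
        have hjm : m₁ ≤ (j:ℕ) := hGhigh i (not_lt.mp him) j hj
        simp [hds, not_lt.mpr hjm]
      rw [hdsi, hweq]
    have hLds : (∑ i ∈ L, if dstar i then w n i dstar else 0) = ∑ i ∈ T, w n i dt := by
      have hcong : ∀ i ∈ L, (if dstar i then w n i dstar else 0)
          = (if dt i then w n i dt else 0) := by
        intro i hi
        have him : (i:ℕ) < m₁ := by
          simpa only [hLdef, Finset.mem_filter, Finset.mem_univ, true_and] using hi
        have hdsi : dstar i = dt i := by simp [hds, him]
        have hweq : w n i dstar = w n i dt := by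
          apply hdep
          intro j hj
          have hjm := hGlow i him j hj
          simp [hds, hjm]
        rw [hdsi, hweq]
      rw [Finset.sum_congr rfl hcong, ← hLT]
      exact (Finset.sum_filter _ _).symm
    have hbad : ∃ j : Fin m, (j:ℕ) < m₁ ∧ b j ≠ dt j := ⟨i₁, hi₁, hne⟩
    have h3 := hScard b hbad
    have h4 := hW_le n b
    have h5 := hn2 b
    rw [split1, split2, hHeq, hLds] at key
    linarith
  -- the error sequence
  set eps : ℕ → ℝ := fun n => ∑ b : Fin m → Bool, ∑ i ∈ Hs, (if b i then w n i b else 0)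
    with hepsdef
  have heps_nonneg : ∀ n, 0 ≤ eps n := by
    intro n
    apply Finset.sum_nonneg
    intro b _
    apply Finset.sum_nonneg
    intro i _
    split
    · exact (hw n i b).1.le
    · exact le_refl _
  have heps_tend : Tendsto eps atTop (nhds 0) := by
    have h : Tendsto (fun n => ∑ b : Fin m → Bool, ∑ i ∈ Hs, (if b i then w n i b else 0))
        atTop (nhds (∑ _b : Fin m → Bool, ∑ _i ∈ Hs, (0:ℝ))) := by
      apply tendsto_finset_sum
      intro b _
      apply tendsto_finset_sum
      intro i hi
      have him : m₁ ≤ (i:ℕ) := not_lt.mp (by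
        simpa only [hHdef, Finset.mem_filter, Finset.mem_univ, true_and] using hi)
      by_cases hb : b i = true
      · have hnag : ¬ ∀ j ∈ G i, b j = dt j := by
          intro hag
          have h1 := hag i (hGmem i)
          rw [hdthigh i him, hb] at h1
          exact absurd h1 (by simp)
        simpa only [if_pos hb] using hC0 i b hnag
      · simp only [if_neg hb]
        exact tendsto_const_nhds
    simpa [hepsdef] using h
  -- the main eventual lower bound on the ratio
  have hmain : ∀ᶠ n in atTop,
      (1:ℝ)/((T.card:ℝ)+1) - eps n ≤
        (∑ i, if dhat n i then 1 - w n i (dhat n) else 0) /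
          (∑ i, if dhat n i then (1:ℝ) else 0) := by
    filter_upwards [hev] with n hlow
    obtain ⟨i₀, hi₀m, hi₀r⟩ := hB n
    have hLden : (∑ i ∈ L, if dhat n i then (1:ℝ) else 0) = (T.card : ℝ) := by
      have hcong : ∀ i ∈ L, (if dhat n i then (1:ℝ) else 0) = (if dt i then (1:ℝ) else 0) := by
        intro i hi
        have him : (i:ℕ) < m₁ := by
          simpa only [hLdef, Finset.mem_filter, Finset.mem_univ, true_and] using hi
        rw [hlow i him]
      rw [Finset.sum_congr rfl hcong,
        show (∑ i ∈ L, if dt i = true then (1:ℝ) else 0)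
          = ∑ i ∈ L.filter (fun i => dt i = true), (1:ℝ) from (Finset.sum_filter _ _).symm,
        hLT]
      simp
    have hHden_ge : (1:ℝ) ≤ ∑ i ∈ Hs, (if dhat n i then (1:ℝ) else 0) := by
      have hi₀Hs : i₀ ∈ Hs := by
        simp only [hHdef, Finset.mem_filter, Finset.mem_univ, true_and]
        exact not_lt.mpr hi₀m
      have h1 := Finset.single_le_sum (f := fun i => if dhat n i then (1:ℝ) else 0)
        (fun i _ => by split <;> norm_num) hi₀Hs
      simpa [hi₀r] using h1
    have hden : (∑ i, if dhat n i then (1:ℝ) else 0)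
        = (T.card:ℝ) + ∑ i ∈ Hs, (if dhat n i then (1:ℝ) else 0) := by
      rw [← hLden, hLdef, hHdef]
      exact (Finset.sum_filter_add_sum_filter_not Finset.univ _ _).symm
    have hnum_split : (∑ i, if dhat n i then 1 - w n i (dhat n) else 0)
        = (∑ i ∈ L, if dhat n i then 1 - w n i (dhat n) else 0)
          + ∑ i ∈ Hs, (if dhat n i then 1 - w n i (dhat n) else 0) := by
      rw [hLdef, hHdef]
      exact (Finset.sum_filter_add_sum_filter_not Finset.univ _ _).symm
    have hLnum_nonneg : 0 ≤ ∑ i ∈ L, (if dhat n i then 1 - w n i (dhat n) else 0) := by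
      apply Finset.sum_nonneg
      intro i _
      split
      · linarith [(hw n i (dhat n)).2]
      · exact le_refl _
    have hHnum : (∑ i ∈ Hs, if dhat n i then 1 - w n i (dhat n) else 0)
        = (∑ i ∈ Hs, if dhat n i then (1:ℝ) else 0)
          - ∑ i ∈ Hs, (if dhat n i then w n i (dhat n) else 0) := by
      rw [← Finset.sum_sub_distrib]
      apply Finset.sum_congr rfl
      intro i _
      split <;> simp
    have hHW_le : (∑ i ∈ Hs, if dhat n i then w n i (dhat n) else 0) ≤ eps n := by
      have hnn : ∀ c : Fin m → Bool, c ∈ (Finset.univ : Finset (Fin m → Bool)) →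
          0 ≤ ∑ i ∈ Hs, (if c i then w n i c else 0) := by
        intro c _
        apply Finset.sum_nonneg
        intro i _
        split
        · exact (hw n i c).1.le
        · exact le_refl _
      have h1 := Finset.single_le_sum
        (f := fun c : Fin m → Bool => ∑ i ∈ Hs, (if c i then w n i c else 0))
        hnn (Finset.mem_univ (dhat n))
      simpa [hepsdef] using h1
    set a := ∑ i ∈ Hs, (if dhat n i then (1:ℝ) else 0) with hadef
    have hτ : (0:ℝ) ≤ (T.card:ℝ) := Nat.cast_nonneg _
    have hden_pos : 0 < (T.card:ℝ) + a := by linarith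
    have hnum_ge : a - eps n ≤ (∑ i, if dhat n i then 1 - w n i (dhat n) else 0) := by
      rw [hnum_split, hHnum]
      linarith
    calc (1:ℝ)/((T.card:ℝ)+1) - eps n
        ≤ (a - eps n) / ((T.card:ℝ) + a) := by
          have h1 : (1:ℝ)/((T.card:ℝ)+1) ≤ a/((T.card:ℝ)+a) := by
            rw [div_le_div_iff₀ (by linarith) (by linarith)]
            nlinarith
          have h3 : eps n/((T.card:ℝ)+a) ≤ eps n :=
            div_le_self (heps_nonneg n) (by linarith)
          rw [sub_div]
          linarith
      _ ≤ (∑ i, if dhat n i then 1 - w n i (dhat n) else 0) / ((T.card:ℝ) + a) := by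
          gcongr
      _ = (∑ i, if dhat n i then 1 - w n i (dhat n) else 0) /
            (∑ i, if dhat n i then (1:ℝ) else 0) := by
          rw [hden]
  constructor
  · obtain ⟨N, hN⟩ := eventually_atTop.mp hev
    exact ⟨N, fun n hn => ⟨hN n hn, hB n⟩⟩
  · have hg : Tendsto (fun n => (1:ℝ)/((T.card:ℝ)+1) - eps n) atTop
        (nhds ((1:ℝ)/((T.card:ℝ)+1))) := by
      simpa using tendsto_const_nhds.sub heps_tend
    have hfle : ∀ n, (∑ i, if dhat n i then 1 - w n i (dhat n) else 0) /
        (∑ i, if dhat n i then (1:ℝ) else 0) ≤ 1 := by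
      intro n
      have hden_nonneg : (0:ℝ) ≤ ∑ i, if dhat n i then (1:ℝ) else 0 := by
        apply Finset.sum_nonneg
        intro i _
        split <;> norm_num
      rcases eq_or_lt_of_le hden_nonneg with h | h
      · rw [← h]
        simp
      · rw [div_le_one h]
        apply Finset.sum_le_sum
        intro i _
        split
        · linarith [(hw n i (dhat n)).1]
        · linarith [hden_nonneg]
    refine le_trans (le_of_eq hg.liminf_eq.symm)
      (Filter.liminf_le_liminf hmain ?_ ?_)
    · exact hg.isBoundedUnder_ge
    · exact (isBoundedUnder_of ⟨1, hfle⟩).isCoboundedUnder_ge
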